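/- Let (Y_t)_{t∈[0,T]} be a nonnegative (F_t)-progressively measurable process with each Y_t integrable and sup_{t∈[0,T]} E[Y_t] < +∞, let (φ_t)_{t∈[0,T]} be a nonnegative progressively measurable process with E[∫₀^T φ_s ds] < +∞, let u ∈ L¹([0,T];ℝ₊) and k₁, k₂ ≥ 0. Assume that for each t ∈ [0,T], almost surely Y_t ≤ E[∫₀^T φ_s ds | F_t] + E[∫_t^T u(s)(k₁ + k₂ Y_s) ds | F_t]. Then for each t ∈ [0,T], almost surely Y_t ≤ ( k₁ ∫₀^T u(s) ds + E[∫₀^T φ_s ds | F_t] ) · exp( k₂ ∫₀^T u(s) ds ). (Conditional Gronwall estimate (20) in the proof of Theorem 2.4.) -/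

import Mathlib

open MeasureTheory Set Filter Topology

noncomputable section

/-- The time interval `[0,T]`, where `0 < T ≤ +∞` is an extended real
(understood as `[0,+∞)` when `T = +∞`). -/
def timeSet (T : EReal) : Set ℝ := {s : ℝ | 0 ≤ s ∧ (s : EReal) ≤ T}

open scoped ENNReal

section AuxLemmas

lemma aux_pi_le (μ : Measure ℝ) [IsFiniteMeasure μ] (n : ℕ) :
    (n + 1 : ℝ≥0∞) * ∫⁻ r, (μ (Ioi r)) ^ n ∂μ ≤ (μ univ) ^ (n + 1) := by
  classical
  set π : Measure (Fin (n+1) → ℝ) := Measure.pi (fun _ => μ) with hπ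
  set A : Fin (n+1) → Set (Fin (n+1) → ℝ) := fun k => {x | ∀ i, i ≠ k → x k < x i} with hA
  have hAmeas : ∀ k, MeasurableSet (A k) := by
    intro k
    have : A k = ⋂ i, ⋂ (_ : i ≠ k), {x : Fin (n+1) → ℝ | x k < x i} := by
      ext x; simp [hA]
    rw [this]
    exact MeasurableSet.iInter fun i => MeasurableSet.iInter fun _ =>
      measurableSet_lt (measurable_pi_apply k) (measurable_pi_apply i)
  -- each A k has the same measure
  have hAeq : ∀ k, π (A k) = π (A 0) := by
    intro k
    have hmp := measurePreserving_piCongrLeft (fun _ : Fin (n+1) => μ) (Equiv.swap 0 k)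
    have hcoe : ∀ (y : Fin (n+1) → ℝ) (i : Fin (n+1)),
        (MeasurableEquiv.piCongrLeft (fun _ => ℝ) (Equiv.swap 0 k)) y i
          = y (Equiv.swap 0 k i) := by
      intro y i
      simp [MeasurableEquiv.piCongrLeft, Equiv.piCongrLeft, Equiv.piCongrLeft',
        Equiv.symm_symm, Equiv.swap_apply_def]
      exact eq_rec_constant _ _
    have hpre : (MeasurableEquiv.piCongrLeft (fun _ => ℝ) (Equiv.swap 0 k)) ⁻¹' (A 0) = A k := by
      ext x
      simp only [mem_preimage, hA, mem_setOf_eq, hcoe]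
      constructor
      · intro h j hj
        have h0 : Equiv.swap 0 k j ≠ 0 := by
          intro hc
          apply hj
          have := congrArg (Equiv.swap 0 k) hc
          simpa [Equiv.swap_apply_left] using this
        have := h _ h0
        simpa [Equiv.swap_apply_left, Equiv.swap_apply_self] using this
      · intro h i hi
        have h0 : Equiv.swap 0 k i ≠ k := by
          intro hc
          apply hi
          have := congrArg (Equiv.swap 0 k) hc
          simpa [Equiv.swap_apply_right, Equiv.swap_apply_self] using this
        have := h _ h0
        simpa [Equiv.swap_apply_left] using this
    calc π (A k) = π ((MeasurableEquiv.piCongrLeft (fun _ => ℝ) (Equiv.swap 0 k)) ⁻¹' (A 0)) := by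
          rw [hpre]
      _ = π (A 0) := hmp.measure_preimage (hAmeas 0).nullMeasurableSet
  -- disjointness
  have hdisj : Pairwise (Function.onFun Disjoint A) := by
    intro k l hkl
    refine Set.disjoint_left.mpr fun x hxk hxl => ?_
    exact absurd (hxk l hkl.symm) (not_lt.mpr (hxl k hkl).le)
  have hsum : ∑ k : Fin (n+1), π (A k) ≤ π univ := by
    rw [← tsum_fintype (L := SummationFilter.unconditional _)]
    rw [← measure_iUnion hdisj hAmeas]
    exact measure_mono (subset_univ _)
  have hcard : ∑ k : Fin (n+1), π (A k) = (n+1 : ℝ≥0∞) * π (A 0) := by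
    simp [hAeq, Finset.sum_const, Finset.card_univ, mul_comm]
  -- identify π (A 0) with the lintegral
  have hA0 : π (A 0) = ∫⁻ r, (μ (Ioi r)) ^ n ∂μ := by
    have hmp := measurePreserving_piFinSuccAbove (fun _ : Fin (n+1) => μ) 0
    set B : Set (ℝ × (Fin n → ℝ)) := {p | ∀ j, p.1 < p.2 j} with hB
    have hBmeas : MeasurableSet B := by
      have : B = ⋂ j, {p : ℝ × (Fin n → ℝ) | p.1 < p.2 j} := by ext p; simp [hB]
      rw [this]
      exact MeasurableSet.iInter fun j =>
        measurableSet_lt measurable_fst ((measurable_pi_apply j).comp measurable_snd)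
    have hcoe2 : ∀ x : Fin (n+1) → ℝ,
        (MeasurableEquiv.piFinSuccAbove (fun _ => ℝ) 0) x
          = (x 0, fun j => x (Fin.succAbove 0 j)) := by
      intro x
      simp only [MeasurableEquiv.piFinSuccAbove, Fin.insertNthEquiv, Fin.succAbove_zero,
        MeasurableEquiv.coe_mk, Equiv.symm_symm]
      rfl
    have hpre : (MeasurableEquiv.piFinSuccAbove (fun _ => ℝ) 0) ⁻¹' B = A 0 := by
      ext x
      simp only [mem_preimage, hB, hA, mem_setOf_eq, hcoe2]
      constructor
      · intro h i hi
        obtain ⟨j, rfl⟩ := Fin.exists_succAbove_eq hi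
        exact h j
      · intro h j
        exact h _ (Fin.succAbove_ne _ _)
    have := hmp.measure_preimage hBmeas.nullMeasurableSet
    rw [hpre] at this
    rw [this]
    rw [Measure.prod_apply hBmeas]
    congr 1
    funext r
    have : Prod.mk r ⁻¹' B = univ.pi (fun _ : Fin n => Ioi r) := by
      ext y; simp [hB]
    rw [this, Measure.pi_pi]
    simp
  rw [hA0] at hcard
  rw [← hcard]
  refine hsum.trans ?_
  rw [hπ, Measure.pi_univ]
  simp


lemma aux_key (ν : Measure ℝ) [IsFiniteMeasure ν] (n : ℕ) (s : ℝ) :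
    ∫⁻ r in Ioi s, (ν (Ioi r)) ^ n ∂ν ≤ (ν (Ioi s)) ^ (n + 1) / (n + 1) := by
  set μ := ν.restrict (Ioi s) with hμ
  have hres : ∀ᵐ r ∂μ, (ν (Ioi r)) ^ n = (μ (Ioi r)) ^ n := by
    filter_upwards [ae_restrict_mem measurableSet_Ioi] with r hr
    rw [hμ, Measure.restrict_apply measurableSet_Ioi,
      inter_eq_self_of_subset_left (Ioi_subset_Ioi hr.le)]
  rw [lintegral_congr_ae hres]
  have h2 := aux_pi_le μ n
  have huniv : μ univ = ν (Ioi s) := by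
    rw [hμ, Measure.restrict_apply_univ]
  rw [huniv] at h2
  rw [ENNReal.le_div_iff_mul_le (Or.inl (by simp)) (Or.inl (by simp))]
  rw [mul_comm]
  exact h2

lemma key_real (X : Set ℝ) (hX : MeasurableSet X) (u : ℝ → ℝ)
    (hu : IntegrableOn u X) (humeas : Measurable u) (hu0 : ∀ r, 0 ≤ u r) (n : ℕ) (s : ℝ) :
    ∫ r in Ioi s ∩ X, u r * (∫ q in Ioi r ∩ X, u q) ^ n
      ≤ (∫ r in Ioi s ∩ X, u r) ^ (n + 1) / (n + 1) := by
  set ν : Measure ℝ := (volume.restrict X).withDensity (fun r => ENNReal.ofReal (u r)) with hν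
  have hres : ∀ V : Set ℝ, MeasurableSet V →
      ν V = ENNReal.ofReal (∫ q in V ∩ X, u q) := by
    intro V hV
    rw [hν, withDensity_apply _ hV, Measure.restrict_restrict hV,
      ofReal_integral_eq_lintegral_ofReal (hu.mono_set inter_subset_right)
        (ae_of_all _ fun r => hu0 r)]
  have hfin : IsFiniteMeasure ν := by
    constructor
    rw [hres univ MeasurableSet.univ]
    exact ENNReal.ofReal_lt_top
  have hIoi : ∀ r : ℝ, ν (Ioi r) = ENNReal.ofReal (∫ q in Ioi r ∩ X, u q) := fun r =>
    hres (Ioi r) measurableSet_Ioi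
  have hInonneg : ∀ r : ℝ, 0 ≤ ∫ q in Ioi r ∩ X, u q := fun r =>
    setIntegral_nonneg (measurableSet_Ioi.inter hX) fun q _ => hu0 q
  -- convert LHS
  have hmeasI : Measurable fun r => ∫ q in Ioi r ∩ X, u q := by
    have : Antitone fun r => ∫ q in Ioi r ∩ X, u q := by
      intro a b hab
      exact setIntegral_mono_set (hu.mono_set inter_subset_right)
        (ae_of_all _ fun q => hu0 q)
        (HasSubset.Subset.eventuallyLE (inter_subset_inter_left X (Ioi_subset_Ioi hab)))
    exact this.measurable
  set I : ℝ → ℝ := fun r => ∫ q in Ioi r ∩ X, u q with hI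
  set M : ℝ := ∫ q in X, u q with hM
  have hIM : ∀ r, I r ≤ M := fun r =>
    setIntegral_mono_set hu (ae_of_all _ fun q => hu0 q)
      (HasSubset.Subset.eventuallyLE inter_subset_right)
  have hM0 : 0 ≤ M := setIntegral_nonneg hX fun q _ => hu0 q
  have hint : IntegrableOn (fun r => u r * I r ^ n) (Ioi s ∩ X) := by
    refine Integrable.mono ((hu.mono_set inter_subset_right).const_mul (M ^ n))
      ((humeas.mul ((hmeasI.pow_const n))).aestronglyMeasurable) ?_
    refine ae_of_all _ fun r => ?_
    rw [Real.norm_eq_abs, Real.norm_eq_abs,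
      abs_of_nonneg (mul_nonneg (hu0 r) (pow_nonneg (hInonneg r) n)),
      abs_of_nonneg (mul_nonneg (pow_nonneg hM0 n) (hu0 r)), mul_comm (M ^ n) (u r)]
    exact mul_le_mul_of_nonneg_left (pow_le_pow_left₀ (hInonneg r) (hIM r) n) (hu0 r)
  have hmeasν : Measurable fun r => ν (Ioi r) ^ n := by
    have h : (fun r => ν (Ioi r) ^ n) = fun r => (ENNReal.ofReal (I r)) ^ n := by
      funext r; rw [hIoi r]
    rw [h]; exact (hmeasI.ennreal_ofReal).pow_const n
  have hLHS : ∫ r in Ioi s ∩ X, u r * I r ^ n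
      = (∫⁻ r in Ioi s, (ν (Ioi r)) ^ n ∂ν).toReal := by
    have h1 : ν.restrict (Ioi s) = (volume.restrict (Ioi s ∩ X)).withDensity
        (fun r => ENNReal.ofReal (u r)) := by
      rw [hν, restrict_withDensity measurableSet_Ioi,
        Measure.restrict_restrict measurableSet_Ioi]
    rw [h1, lintegral_withDensity_eq_lintegral_mul _ humeas.ennreal_ofReal hmeasν]
    have h2 : ∀ r : ℝ, ((fun r => ENNReal.ofReal (u r)) * fun r => ν (Ioi r) ^ n) r
        = ENNReal.ofReal (u r * I r ^ n) := by
      intro r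
      simp only [Pi.mul_apply, hIoi r, ← hI]
      rw [← ENNReal.ofReal_pow (hInonneg r), ← ENNReal.ofReal_mul (hu0 r)]
    rw [lintegral_congr h2, ← ofReal_integral_eq_lintegral_ofReal hint
      (ae_of_all _ fun r => mul_nonneg (hu0 r) (pow_nonneg (hInonneg r) n)),
      ENNReal.toReal_ofReal]
    exact setIntegral_nonneg (measurableSet_Ioi.inter hX)
      fun r _ => mul_nonneg (hu0 r) (pow_nonneg (hInonneg r) n)
  rw [hLHS]
  have hkey := aux_key ν n s
  have hne : (ν (Ioi s)) ^ (n + 1) / (n + 1) ≠ ⊤ := by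
    refine (ENNReal.div_lt_top ?_ ?_).ne
    · exact ENNReal.pow_ne_top (by rw [hIoi s]; exact ENNReal.ofReal_ne_top)
    · simp
  have h3 := ENNReal.toReal_mono hne hkey
  refine h3.trans ?_
  rw [ENNReal.toReal_div, ENNReal.toReal_pow, hIoi s, ENNReal.toReal_ofReal (hInonneg s),
    show ((n : ℝ≥0∞) + 1).toReal = (n : ℝ) + 1 by
      rw [ENNReal.toReal_add (by simp) (by simp)]; simp]

lemma prog_jointly_meas {Ω : Type*} {m0 : MeasurableSpace Ω} (ℱ : Filtration ℝ m0)
    (Y : ℝ → Ω → ℝ) (h : ProgMeasurable ℱ Y) :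
    StronglyMeasurable (Function.uncurry Y) := by
  have hG : ∀ n : ℕ, StronglyMeasurable (fun p : ℝ × Ω => Y (min p.1 n) p.2) := by
    intro n
    have h1 := h (n : ℝ)
    have hψ : Measurable[Prod.instMeasurableSpace, Subtype.instMeasurableSpace.prod (ℱ n)]
        (fun p : ℝ × Ω => ((⟨min p.1 n, mem_Iic.2 (min_le_right _ _)⟩ : Iic (n:ℝ)), p.2)) := by
      refine Measurable.prodMk ?_ ?_
      · exact Measurable.subtype_mk (measurable_fst.min measurable_const)
      · exact measurable_snd.mono le_rfl (ℱ.le n)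
    exact h1.comp_measurable hψ
  refine stronglyMeasurable_of_tendsto atTop hG (tendsto_pi_nhds.mpr fun p => ?_)
  obtain ⟨N, hN⟩ := exists_nat_ge p.1
  refine tendsto_const_nhds.congr' ?_
  filter_upwards [eventually_ge_atTop N] with n hn
  have hpn : p.1 ≤ (n : ℝ) := le_trans hN (by exact_mod_cast hn)
  simp [Function.uncurry, min_eq_left hpn]


end AuxLemmas

/-- **Conditional Gronwall estimate (20) in the proof of Theorem 2.4.** Let `Y` be a
nonnegative progressively measurable process with `Y_t` integrable and `sup_t E[Y_t] < ∞`,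
`φ ≥ 0` progressively measurable with `E[∫₀^T φ_s ds] < ∞`, `u ∈ L¹([0,T];ℝ₊)`, `k₁, k₂ ≥ 0`.
If `Y_t ≤ E[∫₀^T φ_s ds | F_t] + E[∫_t^T u(s)(k₁ + k₂ Y_s) ds | F_t]` a.s. for each `t`,
then `Y_t ≤ (k₁ ∫₀^T u + E[∫₀^T φ_s ds | F_t]) · exp(k₂ ∫₀^T u)` a.s. for each `t`. -/
theorem conditional_gronwall
    {Ω : Type*} {m0 : MeasurableSpace Ω} (P : Measure Ω) [IsProbabilityMeasure P]
    (hPcomplete : P.IsComplete)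
    (ℱ : Filtration ℝ m0)
    (T : EReal) (hT : 0 < T)
    (Y : ℝ → Ω → ℝ)
    (hY_nonneg : ∀ t ω, 0 ≤ Y t ω)
    (hY_prog : ProgMeasurable ℱ fun t ω => Y t ω)
    (hY_int : ∀ t ∈ timeSet T, Integrable (Y t) P)
    (hY_sup : ∃ C, ∀ t ∈ timeSet T, ∫ ω, Y t ω ∂P ≤ C)
    (φ : ℝ → Ω → ℝ)
    (hφ_nonneg : ∀ t ω, 0 ≤ φ t ω)
    (hφ_prog : ProgMeasurable ℱ fun t ω => φ t ω)
    (hφ_int : Integrable (fun ω => ∫ s in timeSet T, φ s ω) P)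
    (u : ℝ → ℝ)
    (hu_nonneg : ∀ s ∈ timeSet T, 0 ≤ u s)
    (hu_int : IntegrableOn u (timeSet T))
    (k₁ k₂ : ℝ) (hk₁ : 0 ≤ k₁) (hk₂ : 0 ≤ k₂)
    (hmain : ∀ t ∈ timeSet T, ∀ᵐ ω ∂P,
      Y t ω ≤ (P[fun ω' => ∫ s in timeSet T, φ s ω' | ℱ t]) ω
        + (P[fun ω' => ∫ s in Ioi t ∩ timeSet T, u s * (k₁ + k₂ * Y s ω') | ℱ t]) ω) :
    ∀ t ∈ timeSet T, ∀ᵐ ω ∂P,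
      Y t ω ≤ (k₁ * (∫ s in timeSet T, u s)
          + (P[fun ω' => ∫ s in timeSet T, φ s ω' | ℱ t]) ω)
        * Real.exp (k₂ * ∫ s in timeSet T, u s) := by
  intro t ht
  set S : Set ℝ := timeSet T with hSdef
  have hSmeas : MeasurableSet S := by
    have h : S = Ici 0 ∩ ((fun s : ℝ => (s : EReal)) ⁻¹' Iic T) := rfl
    rw [h]
    exact measurableSet_Ici.inter (continuous_coe_real_ereal.measurable measurableSet_Iic)
  obtain ⟨C, hC⟩ := hY_sup
  have hC0 : 0 ≤ C := le_trans (integral_nonneg fun ω => hY_nonneg t ω) (hC t ht)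
  -- measurable nonneg version of u
  obtain ⟨u₀, hu₀meas, hu₀ae⟩ : ∃ u₀ : ℝ → ℝ, Measurable u₀ ∧ u =ᵐ[volume.restrict S] u₀ := by
    obtain ⟨u₀, h1, h2⟩ := hu_int.aemeasurable
    exact ⟨u₀, h1, h2⟩
  set u' : ℝ → ℝ := fun r => max (u₀ r) 0 with hu'def
  have hu'meas : Measurable u' := hu₀meas.max measurable_const
  have hu'0 : ∀ r, 0 ≤ u' r := fun r => le_max_right _ _
  have hu'ae : u =ᵐ[volume.restrict S] u' := by
    have h1 : ∀ᵐ r ∂(volume.restrict S), r ∈ S := ae_restrict_mem hSmeas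
    filter_upwards [h1, hu₀ae] with r hr h2
    rw [hu'def]
    simp only [← h2, max_eq_left (hu_nonneg r hr)]
  have hu'int : IntegrableOn u' S := hu_int.congr hu'ae
  set U : ℝ := ∫ r in S, u r with hUdef
  have hU' : ∫ r in S, u' r = U := (integral_congr_ae hu'ae).symm
  have hU0 : 0 ≤ U := by
    rw [hUdef]; exact setIntegral_nonneg hSmeas fun r hr => hu_nonneg r hr
  have hYj : StronglyMeasurable (Function.uncurry Y) := prog_jointly_meas ℱ Y hY_prog
  -- the tail mass function
  set I : ℝ → ℝ := fun r => ∫ q in Ioi r ∩ S, u' q with hIdef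
  have hIanti : Antitone I := by
    intro a b hab
    exact setIntegral_mono_set (hu'int.mono_set inter_subset_right)
      (ae_of_all _ fun q => hu'0 q)
      (HasSubset.Subset.eventuallyLE (inter_subset_inter_left S (Ioi_subset_Ioi hab)))
  have hImeas : Measurable I := hIanti.measurable
  have hI0 : ∀ r, 0 ≤ I r := fun r =>
    setIntegral_nonneg (measurableSet_Ioi.inter hSmeas) fun q _ => hu'0 q
  have hIU : ∀ r, I r ≤ U := by
    intro r
    rw [← hU']
    exact setIntegral_mono_set hu'int (ae_of_all _ fun q => hu'0 q)
      (HasSubset.Subset.eventuallyLE inter_subset_right)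
  set Φ : Ω → ℝ := P[fun ω' => ∫ r in S, φ r ω' | ℱ t] with hΦdef
  set EX : ℝ := Real.exp (k₂ * U) with hEXdef
  have hEX0 : 0 ≤ EX := le_of_lt (Real.exp_pos _)
  set Z : Ω → ℝ := fun ω => (k₁ * U + Φ ω) * EX with hZdef
  have hZint : Integrable Z P := ((integrable_const (k₁ * U)).add integrable_condExp).mul_const EX
  -- the key set-integral inequality
  have hsetineq : ∀ A : Set Ω, MeasurableSet[ℱ t] A →
      ∫ ω in A, Y t ω ∂P ≤ ∫ ω in A, Z ω ∂P := by
    intro A hA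
    have hAm : MeasurableSet A := ℱ.le t A hA
    set pA : ℝ := (P A).toReal with hpAdef
    have hpA0 : 0 ≤ pA := ENNReal.toReal_nonneg
    have hpA1 : pA ≤ 1 := by
      rw [hpAdef]
      exact ENNReal.toReal_le_of_le_ofReal zero_le_one (by simpa using prob_le_one)
    set f : ℝ → ℝ := fun r => ∫ ω in A, Y r ω ∂P with hfdef
    have hfmeas : StronglyMeasurable f := hYj.integral_prod_right'
    have hf0 : ∀ r, 0 ≤ f r := fun r => setIntegral_nonneg hAm fun ω _ => hY_nonneg r ω
    have hfC : ∀ r ∈ S, f r ≤ C := by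
      intro r hr
      exact le_trans (setIntegral_le_integral (hY_int r hr) (ae_of_all _ (hY_nonneg r))) (hC r hr)
    set b : ℝ := (∫ ω in A, (∫ r in S, φ r ω) ∂P) + k₁ * pA * U with hbdef
    have hb0 : 0 ≤ b := by
      apply add_nonneg
      · exact setIntegral_nonneg hAm fun ω _ =>
          setIntegral_nonneg hSmeas fun r _ => hφ_nonneg r ω
      · positivity
    -- integrability of u' * f on subsets of S
    have hufint : ∀ V : Set ℝ, MeasurableSet V → V ⊆ S →
        IntegrableOn (fun r => u' r * f r) V := by
      intro V hVmeas hVS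
      refine Integrable.mono ((hu'int.mono_set hVS).const_mul C)
        ((hu'meas.stronglyMeasurable.mul hfmeas).aestronglyMeasurable) ?_
      filter_upwards [ae_restrict_mem hVmeas] with r hr
      rw [Real.norm_eq_abs, Real.norm_eq_abs,
        abs_of_nonneg (mul_nonneg (hu'0 r) (hf0 r)),
        abs_of_nonneg (mul_nonneg hC0 (hu'0 r)), mul_comm C (u' r)]
      exact mul_le_mul_of_nonneg_left (hfC r (hVS hr)) (hu'0 r)
    -- the one-step inequality
    have hstep : ∀ s, s ∈ S → t ≤ s →
        f s ≤ b + k₂ * ∫ r in Ioi s ∩ S, u' r * f r := by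
      intro s hsS hts
      set V : Set ℝ := Ioi s ∩ S with hVdef
      have hVmeas : MeasurableSet V := measurableSet_Ioi.inter hSmeas
      have hVS : V ⊆ S := inter_subset_right
      have hAs : MeasurableSet[ℱ s] A := ℱ.mono hts A hA
      set νV : Measure ℝ := volume.restrict V with hνVdef
      set W : ℝ × Ω → ℝ := fun p => u' p.1 * (k₁ + k₂ * Y p.1 p.2) with hWdef
      have hW0 : ∀ p, 0 ≤ W p := fun p => mul_nonneg (hu'0 p.1)
        (add_nonneg hk₁ (mul_nonneg hk₂ (hY_nonneg p.1 p.2)))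
      have hWsm : StronglyMeasurable W := by
        refine ((hu'meas.comp measurable_fst).stronglyMeasurable).mul ?_
        exact stronglyMeasurable_const.add (hYj.const_mul k₂)
      have hWint : Integrable W (νV.prod P) := by
        refine ⟨hWsm.aestronglyMeasurable, ?_⟩
        rw [hasFiniteIntegral_iff_ofReal (ae_of_all _ hW0)]
        rw [MeasureTheory.lintegral_prod _ hWsm.measurable.ennreal_ofReal.aemeasurable]
        have hbnd : ∀ᵐ r ∂νV, (∫⁻ ω, ENNReal.ofReal (W (r, ω)) ∂P)
            ≤ ENNReal.ofReal (u' r) * ENNReal.ofReal (k₁ + k₂ * C) := by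
          filter_upwards [ae_restrict_mem hVmeas] with r hr
          have hYr : Integrable (Y r) P := hY_int r (hVS hr)
          have hYrm : Measurable (Y r) := hYj.measurable.comp measurable_prodMk_left
          have h1 : ∀ ω, ENNReal.ofReal (W (r, ω))
              = ENNReal.ofReal (u' r) * ENNReal.ofReal (k₁ + k₂ * Y r ω) := by
            intro ω
            rw [hWdef]
            exact ENNReal.ofReal_mul (hu'0 r)
          calc ∫⁻ ω, ENNReal.ofReal (W (r, ω)) ∂P
              = ENNReal.ofReal (u' r) * ∫⁻ ω, ENNReal.ofReal (k₁ + k₂ * Y r ω) ∂P := by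
                simp_rw [h1]
                exact lintegral_const_mul _ ((measurable_const.add
                  (hYrm.const_mul k₂)).ennreal_ofReal)
            _ ≤ ENNReal.ofReal (u' r) * ENNReal.ofReal (k₁ + k₂ * C) := by
                refine mul_le_mul_right ?_ _
                have h2 : ∫⁻ ω, ENNReal.ofReal (k₁ + k₂ * Y r ω) ∂P
                    = ENNReal.ofReal (∫ ω, (k₁ + k₂ * Y r ω) ∂P) :=
                  (ofReal_integral_eq_lintegral_ofReal
                    ((integrable_const k₁).add (hYr.const_mul k₂))
                    (ae_of_all _ fun ω => add_nonneg hk₁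
                      (mul_nonneg hk₂ (hY_nonneg r ω)))).symm
                rw [h2]
                apply ENNReal.ofReal_le_ofReal
                rw [integral_add (integrable_const k₁) (hYr.const_mul k₂),
                  integral_const, integral_const_mul]
                simp only [probReal_univ, measure_univ, ENNReal.toReal_one, smul_eq_mul, one_mul]
                exact add_le_add_right (mul_le_mul_of_nonneg_left (hC r (hVS hr)) hk₂) k₁
        calc ∫⁻ r, (∫⁻ ω, ENNReal.ofReal (W (r, ω)) ∂P) ∂νV
            ≤ ∫⁻ r, ENNReal.ofReal (u' r) * ENNReal.ofReal (k₁ + k₂ * C) ∂νV :=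
              lintegral_mono_ae hbnd
          _ = (∫⁻ r, ENNReal.ofReal (u' r) ∂νV) * ENNReal.ofReal (k₁ + k₂ * C) :=
              lintegral_mul_const _ hu'meas.ennreal_ofReal
          _ < ⊤ := by
              have h3 : ∫⁻ r, ENNReal.ofReal (u' r) ∂νV = ENNReal.ofReal (∫ r in V, u' r) :=
                (ofReal_integral_eq_lintegral_ofReal (hu'int.mono_set hVS)
                  (ae_of_all _ hu'0)).symm
              rw [h3]
              exact ENNReal.mul_lt_top ENNReal.ofReal_lt_top ENNReal.ofReal_lt_top
      set G : Ω → ℝ := fun ω => ∫ r in Ioi s ∩ S, u r * (k₁ + k₂ * Y r ω) with hGdef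
      have hGu' : ∀ ω, G ω = ∫ r, W (r, ω) ∂νV := by
        intro ω
        apply integral_congr_ae
        filter_upwards [ae_restrict_of_ae_restrict_of_subset hVS hu'ae] with r hr
        rw [hWdef]
        simp only
        rw [hr]
      have hGint : Integrable G P := by
        refine (hWint.swap.integral_prod_left).congr ?_
        exact ae_of_all _ fun ω => (hGu' ω).symm
      have h2 : f s ≤ (∫ ω in A, (∫ r in S, φ r ω) ∂P) + ∫ ω in A, G ω ∂P := by
        have hm := hmain s hsS
        have hint1 : Integrable (P[fun ω' => ∫ r in S, φ r ω'|ℱ s]) P := integrable_condExp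
        have hint2 : Integrable (P[G|ℱ s]) P := integrable_condExp
        have hle : ∫ ω in A, Y s ω ∂P ≤ ∫ ω in A,
            ((P[fun ω' => ∫ r in S, φ r ω'|ℱ s]) ω + (P[G|ℱ s]) ω) ∂P := by
          refine integral_mono_ae ((hY_int s hsS).restrict) ((hint1.add hint2).restrict) ?_
          exact ae_restrict_of_ae hm
        rw [integral_add (hint1.restrict) (hint2.restrict),
          setIntegral_condExp (ℱ.le s) hφ_int hAs,
          setIntegral_condExp (ℱ.le s) hGint hAs] at hle
        exact hle
      have hswap : ∫ ω in A, G ω ∂P = ∫ r, (∫ ω in A, W (r, ω) ∂P) ∂νV := by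
        have h1 : ∫ ω in A, G ω ∂P = ∫ ω, (∫ r, W (r, ω) ∂νV) ∂(P.restrict A) :=
          integral_congr_ae (ae_of_all _ fun ω => hGu' ω)
        rw [h1]
        have hWA : Integrable (Function.uncurry fun ω r => W (r, ω))
            ((P.restrict A).prod νV) := by
          have h3 : Integrable W ((νV.prod P).restrict (univ ×ˢ A)) := hWint.restrict
          rw [← Measure.prod_restrict, Measure.restrict_univ] at h3
          exact h3.swap
        exact integral_integral_swap hWA
      have hinner : ∀ᵐ r ∂νV, (∫ ω in A, W (r, ω) ∂P) = u' r * (k₁ * pA + k₂ * f r) := by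
        filter_upwards [ae_restrict_mem hVmeas] with r hr
        have hYr : Integrable (Y r) P := hY_int r (hVS hr)
        rw [hWdef]
        simp only
        rw [integral_const_mul]
        congr 1
        rw [integral_add ((integrable_const k₁).restrict) ((hYr.const_mul k₂).restrict),
          setIntegral_const, integral_const_mul]
        simp [hpAdef, hfdef, smul_eq_mul, mul_comm, measureReal_def]
      have h4 : ∫ r, (∫ ω in A, W (r, ω) ∂P) ∂νV
          = ∫ r in V, u' r * (k₁ * pA + k₂ * f r) := integral_congr_ae hinner
      have h5 : ∫ r in V, u' r * (k₁ * pA + k₂ * f r)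
          = (k₁ * pA) * (∫ r in V, u' r) + k₂ * ∫ r in V, u' r * f r := by
        rw [show (fun r => u' r * (k₁ * pA + k₂ * f r))
            = fun r => (k₁ * pA) * u' r + k₂ * (u' r * f r) from funext fun r => by ring]
        rw [integral_add ((hu'int.mono_set hVS).const_mul _)
          ((hufint V hVmeas hVS).const_mul _)]
        simp only [integral_const_mul]
      have h6 : ∫ r in V, u' r ≤ U := by
        rw [← hU']
        exact setIntegral_mono_set hu'int (ae_of_all _ fun q => hu'0 q)
          (HasSubset.Subset.eventuallyLE hVS)
      have h7 : (k₁ * pA) * (∫ r in V, u' r) ≤ k₁ * pA * U :=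
        mul_le_mul_of_nonneg_left h6 (mul_nonneg hk₁ hpA0)
      calc f s ≤ (∫ ω in A, (∫ r in S, φ r ω) ∂P) + ∫ ω in A, G ω ∂P := h2
        _ = (∫ ω in A, (∫ r in S, φ r ω) ∂P)
            + ((k₁ * pA) * (∫ r in V, u' r) + k₂ * ∫ r in V, u' r * f r) := by
            rw [hswap, h4, h5]
        _ ≤ b + k₂ * ∫ r in V, u' r * f r := by
            rw [hbdef]
            linarith [h7]
    -- Gronwall iteration
    have hind : ∀ n : ℕ, ∀ s, s ∈ S → t ≤ s →
        f s ≤ b * (∑ j ∈ Finset.range n, (k₂ * I s) ^ j / (Nat.factorial j : ℝ))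
          + C * ((k₂ * I s) ^ n / (Nat.factorial n : ℝ)) := by
      intro n
      induction n with
      | zero =>
        intro s hsS hts
        simpa using hfC s hsS
      | succ n ihn =>
        intro s hsS hts
        set V : Set ℝ := Ioi s ∩ S with hVdef
        have hVmeas : MeasurableSet V := measurableSet_Ioi.inter hSmeas
        have hVS : V ⊆ S := inter_subset_right
        have hkey : ∀ j : ℕ, ∫ r in V, u' r * I r ^ j
            ≤ I s ^ (j + 1) / ((j : ℝ) + 1) := by
          intro j
          have h := key_real S hSmeas u' hu'int hu'meas hu'0 j s
          exact h
        have hIjint : ∀ j : ℕ, IntegrableOn (fun r => u' r * I r ^ j) V := by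
          intro j
          refine Integrable.mono ((hu'int.mono_set hVS).const_mul (U ^ j))
            ((hu'meas.mul (hImeas.pow_const j)).aestronglyMeasurable) ?_
          refine ae_of_all _ fun r => ?_
          rw [Real.norm_eq_abs, Real.norm_eq_abs,
            abs_of_nonneg (mul_nonneg (hu'0 r) (pow_nonneg (hI0 r) j)),
            abs_of_nonneg (mul_nonneg (pow_nonneg hU0 j) (hu'0 r)), mul_comm (U ^ j) (u' r)]
          exact mul_le_mul_of_nonneg_left (pow_le_pow_left₀ (hI0 r) (hIU r) j) (hu'0 r)
        set Bn : ℝ → ℝ := fun r => b * (∑ j ∈ Finset.range n, (k₂ * I r) ^ j / (Nat.factorial j : ℝ))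
          + C * ((k₂ * I r) ^ n / (Nat.factorial n : ℝ)) with hBndef
        have hfact0 : ∀ j : ℕ, (0:ℝ) < (Nat.factorial j : ℝ) := fun j => by positivity
        have hBn0 : ∀ r, 0 ≤ Bn r := by
          intro r
          refine add_nonneg (mul_nonneg hb0 (Finset.sum_nonneg fun j _ => div_nonneg
            (pow_nonneg (mul_nonneg hk₂ (hI0 r)) j) (le_of_lt (hfact0 j))))
            (mul_nonneg hC0 (div_nonneg (pow_nonneg (mul_nonneg hk₂ (hI0 r)) n)
              (le_of_lt (hfact0 n))))
        set Bmax : ℝ := b * (∑ j ∈ Finset.range n, (k₂ * U) ^ j / (Nat.factorial j : ℝ))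
          + C * ((k₂ * U) ^ n / (Nat.factorial n : ℝ)) with hBmaxdef
        have hBnle : ∀ r, Bn r ≤ Bmax := by
          intro r
          have hik : ∀ j : ℕ, (k₂ * I r) ^ j ≤ (k₂ * U) ^ j := fun j =>
            pow_le_pow_left₀ (mul_nonneg hk₂ (hI0 r)) (mul_le_mul_of_nonneg_left (hIU r) hk₂) j
          refine add_le_add (mul_le_mul_of_nonneg_left (Finset.sum_le_sum fun j _ =>
            (div_le_div_iff_of_pos_right (hfact0 j)).mpr (hik j)) hb0)
            (mul_le_mul_of_nonneg_left ((div_le_div_iff_of_pos_right (hfact0 n)).mpr (hik n)) hC0)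
        have hBmax0 : 0 ≤ Bmax := (hBn0 s).trans (hBnle s)
        have hBnmeas : Measurable Bn := by
          have h1 : Measurable fun r => ∑ j ∈ Finset.range n, (k₂ * I r) ^ j / (Nat.factorial j : ℝ) :=
            Finset.measurable_sum _ fun j _ => ((hImeas.const_mul k₂).pow_const j).div_const _
          exact (h1.const_mul b).add
            ((((hImeas.const_mul k₂).pow_const n).div_const _).const_mul C)
        have hBnint : IntegrableOn (fun r => u' r * Bn r) V := by
          refine Integrable.mono ((hu'int.mono_set hVS).const_mul Bmax)
            ((hu'meas.mul hBnmeas).aestronglyMeasurable) ?_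
          refine ae_of_all _ fun r => ?_
          rw [Real.norm_eq_abs, Real.norm_eq_abs,
            abs_of_nonneg (mul_nonneg (hu'0 r) (hBn0 r)),
            abs_of_nonneg (mul_nonneg hBmax0 (hu'0 r)), mul_comm Bmax (u' r)]
          exact mul_le_mul_of_nonneg_left (hBnle r) (hu'0 r)
        -- pointwise expansion of the integrand
        have hpt : ∀ r, u' r * Bn r
            = (∑ j ∈ Finset.range n, (b * k₂ ^ j / (Nat.factorial j : ℝ)) * (u' r * I r ^ j))
              + (C * k₂ ^ n / (Nat.factorial n : ℝ)) * (u' r * I r ^ n) := by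
          intro r
          rw [hBndef]
          simp only [mul_pow]
          rw [mul_add, Finset.mul_sum, Finset.mul_sum]
          congr 1
          · exact Finset.sum_congr rfl fun j _ => by ring
          · ring
        have hexp : ∫ r in V, u' r * Bn r
            = (∑ j ∈ Finset.range n, (b * k₂ ^ j / (Nat.factorial j : ℝ)) * ∫ r in V, u' r * I r ^ j)
              + (C * k₂ ^ n / (Nat.factorial n : ℝ)) * ∫ r in V, u' r * I r ^ n := by
          rw [show (fun r => u' r * Bn r)
              = fun r => (∑ j ∈ Finset.range n, (b * k₂ ^ j / (Nat.factorial j : ℝ)) * (u' r * I r ^ j))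
                + (C * k₂ ^ n / (Nat.factorial n : ℝ)) * (u' r * I r ^ n) from funext hpt]
          rw [integral_add (integrable_finset_sum _ fun j _ => (hIjint j).const_mul _)
            ((hIjint n).const_mul _), integral_finset_sum _ fun j _ => (hIjint j).const_mul _]
          simp only [integral_const_mul]
        -- put everything together
        have hcoef0 : ∀ j : ℕ, 0 ≤ b * k₂ ^ j / (Nat.factorial j : ℝ) := fun j =>
          div_nonneg (mul_nonneg hb0 (pow_nonneg hk₂ j)) (le_of_lt (hfact0 j))
        have hcoefC0 : 0 ≤ C * k₂ ^ n / (Nat.factorial n : ℝ) :=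
          div_nonneg (mul_nonneg hC0 (pow_nonneg hk₂ n)) (le_of_lt (hfact0 n))
        have hterm : ∀ j : ℕ, k₂ * ((b * k₂ ^ j / (Nat.factorial j : ℝ)) * (I s ^ (j+1) / ((j:ℝ) + 1)))
            = b * ((k₂ * I s) ^ (j+1) / (Nat.factorial (j+1) : ℝ)) := by
          intro j
          have h1 : ((Nat.factorial j : ℝ)) ≠ 0 := ne_of_gt (hfact0 j)
          have h2 : ((j:ℝ) + 1) ≠ 0 := by positivity
          rw [mul_pow]
          push_cast [Nat.factorial_succ]
          field_simp
          ring
        have htermC : k₂ * ((C * k₂ ^ n / (Nat.factorial n : ℝ)) * (I s ^ (n+1) / ((n:ℝ) + 1)))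
            = C * ((k₂ * I s) ^ (n+1) / (Nat.factorial (n+1) : ℝ)) := by
          have h1 : ((Nat.factorial n : ℝ)) ≠ 0 := ne_of_gt (hfact0 n)
          have h2 : ((n:ℝ) + 1) ≠ 0 := by positivity
          rw [mul_pow]
          push_cast [Nat.factorial_succ]
          field_simp
          ring
        calc f s ≤ b + k₂ * ∫ r in V, u' r * f r := hstep s hsS hts
          _ ≤ b + k₂ * ∫ r in V, u' r * Bn r := by
              refine add_le_add_right (mul_le_mul_of_nonneg_left ?_ hk₂) b
              refine setIntegral_mono_on (hufint V hVmeas hVS) hBnint hVmeas fun r hr => ?_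
              exact mul_le_mul_of_nonneg_left (ihn r hr.2 (hts.trans (le_of_lt hr.1))) (hu'0 r)
          _ = b + k₂ * ((∑ j ∈ Finset.range n, (b * k₂ ^ j / (Nat.factorial j : ℝ)) * ∫ r in V, u' r * I r ^ j)
                + (C * k₂ ^ n / (Nat.factorial n : ℝ)) * ∫ r in V, u' r * I r ^ n) := by
              rw [hexp]
          _ ≤ b + k₂ * ((∑ j ∈ Finset.range n, (b * k₂ ^ j / (Nat.factorial j : ℝ)) * (I s ^ (j+1) / ((j:ℝ) + 1)))
                + (C * k₂ ^ n / (Nat.factorial n : ℝ)) * (I s ^ (n+1) / ((n:ℝ) + 1))) := by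
              refine add_le_add_right (mul_le_mul_of_nonneg_left (add_le_add
                (Finset.sum_le_sum fun j _ => mul_le_mul_of_nonneg_left (hkey j) (hcoef0 j))
                (mul_le_mul_of_nonneg_left (hkey n) hcoefC0)) hk₂) b
          _ = b + ((∑ j ∈ Finset.range n, b * ((k₂ * I s) ^ (j+1) / (Nat.factorial (j+1) : ℝ)))
                + C * ((k₂ * I s) ^ (n+1) / (Nat.factorial (n+1) : ℝ))) := by
              rw [mul_add, Finset.mul_sum, htermC]
              congr 2
              exact Finset.sum_congr rfl fun j _ => hterm j
          _ = b * (∑ j ∈ Finset.range (n+1), (k₂ * I s) ^ j / (Nat.factorial j : ℝ))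
                + C * ((k₂ * I s) ^ (n+1) / (Nat.factorial (n+1) : ℝ)) := by
              rw [Finset.sum_range_succ', mul_add, Finset.mul_sum]
              simp only [pow_zero, Nat.factorial_zero, Nat.cast_one]
              ring
    -- take the limit
    have hgron : f t ≤ b * EX := by
      have hx0 : 0 ≤ k₂ * I t := mul_nonneg hk₂ (hI0 t)
      have hbound : ∀ n : ℕ, f t ≤ b * EX + C * ((k₂ * U) ^ n / (Nat.factorial n : ℝ)) := by
        intro n
        refine (hind n t ht le_rfl).trans (add_le_add ?_ ?_)
        · refine mul_le_mul_of_nonneg_left ?_ hb0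
          refine le_trans (Real.sum_le_exp_of_nonneg hx0 n) ?_
          rw [hEXdef]
          exact Real.exp_le_exp.mpr (mul_le_mul_of_nonneg_left (hIU t) hk₂)
        · refine mul_le_mul_of_nonneg_left ?_ hC0
          have h1 : (0:ℝ) < (Nat.factorial n : ℝ) := by positivity
          have h2 : (k₂ * I t) ^ n ≤ (k₂ * U) ^ n :=
            pow_le_pow_left₀ hx0 (mul_le_mul_of_nonneg_left (hIU t) hk₂) n
          exact (div_le_div_iff_of_pos_right h1).mpr h2
      have hlim : Tendsto (fun n : ℕ => b * EX + C * ((k₂ * U) ^ n / (Nat.factorial n : ℝ)))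
          atTop (𝓝 (b * EX)) := by
        have h1 := FloorSemiring.tendsto_pow_div_factorial_atTop (k₂ * U)
        have h2 : Tendsto (fun n : ℕ => C * ((k₂ * U) ^ n / (Nat.factorial n : ℝ)))
            atTop (𝓝 0) := by
          simpa using h1.const_mul C
        simpa using tendsto_const_nhds.add h2
      exact ge_of_tendsto hlim (Eventually.of_forall hbound)
    -- conclude
    have hZcalc : ∫ ω in A, Z ω ∂P = b * EX := by
      have h1 : ∫ ω in A, Z ω ∂P = (∫ ω in A, (k₁ * U + Φ ω) ∂P) * EX := by
        rw [hZdef]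
        exact integral_mul_const _ _
      have h2 : ∫ ω in A, (k₁ * U + Φ ω) ∂P
          = pA * (k₁ * U) + ∫ ω in A, (∫ r in S, φ r ω) ∂P := by
        rw [integral_add ((integrable_const (k₁ * U)).restrict) (integrable_condExp.restrict),
          setIntegral_const, setIntegral_condExp (ℱ.le t) hφ_int hA]
        simp [smul_eq_mul, hpAdef, measureReal_def]
      rw [h1, h2, hbdef]
      ring
    rw [hZcalc]
    exact hgron
  -- derive the a.e. inequality from the set-integral inequality
  have hYtsm : StronglyMeasurable[ℱ t] (Y t) := IsStronglyProgressive.stronglyAdapted hY_prog t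
  have hZsm : StronglyMeasurable[ℱ t] Z :=
    (stronglyMeasurable_const.add stronglyMeasurable_condExp).mul stronglyMeasurable_const
  set D : Set Ω := {ω | Z ω < Y t ω} with hDdef
  have hDm : MeasurableSet[ℱ t] D := hZsm.measurableSet_lt hYtsm
  have hDm0 : MeasurableSet D := ℱ.le t D hDm
  have hD0 : P D = 0 := by
    have h1 := hsetineq D hDm
    have hdiffint : Integrable (fun ω => Y t ω - Z ω) P := (hY_int t ht).sub hZint
    have h2 : ∫ ω in D, (Y t ω - Z ω) ∂P ≤ 0 := by
      rw [integral_sub ((hY_int t ht).restrict) (hZint.restrict)]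
      linarith
    have h3 : 0 ≤ᵐ[P.restrict D] fun ω => Y t ω - Z ω := by
      filter_upwards [ae_restrict_mem hDm0] with ω hω
      exact sub_nonneg.mpr (le_of_lt hω)
    have h4 : (fun ω => Y t ω - Z ω) =ᵐ[P.restrict D] 0 := by
      rw [← integral_eq_zero_iff_of_nonneg_ae h3 (hdiffint.restrict)]
      exact le_antisymm h2 (integral_nonneg_of_ae h3)
    have h5 : ∀ᵐ ω ∂(P.restrict D), False := by
      filter_upwards [ae_restrict_mem hDm0, h4] with ω hω h0
      have : 0 < Y t ω - Z ω := sub_pos.mpr hω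
      rw [h0] at this
      exact lt_irrefl _ this
    have h6 : P.restrict D univ = 0 := by
      have := ae_iff.mp h5
      simpa using this
    rw [← Measure.restrict_apply_univ]
    exact h6
  have hae : ∀ᵐ ω ∂P, ¬ (Z ω < Y t ω) := by
    rw [ae_iff]
    simpa [hDdef] using hD0
  filter_upwards [hae] with ω hω
  exact not_lt.mp hω
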